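/- Let a : [0,∞) → [0,∞) be nondecreasing and right-continuous with a(0) = 0, and let c(t) := inf{s ≥ 0 : a(s) > t} be its right inverse; assume c(t) < ∞ for all t ≥ 0. Let G : [0,∞) → [0,∞) be nondecreasing and right-continuous, so that G∘a is nondecreasing and right-continuous with Lebesgue–Stieltjes measure μ_{G∘a}, and let μ_G be the Lebesgue–Stieltjes measure of G. Define c(s−) := lim_{u↑s} c(u) for s > 0 and c(0−) := 0. Then for every Borel measurable f : [0,∞) → [0,∞], ∫_{[0,∞)} f(s) dμ_{G∘a}(s) = ∫_{[0,∞)} f(c(s−)) dμ_G(s); in particular the atoms at 0 contribute f(0)·G(a(0)) = f(0)·G(0) on the left and f(0)·G(0) on the right. -/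

import Mathlib

open MeasureTheory Set
open scoped ENNReal

noncomputable section

namespace Stmt8

/-- Lemma 3.10, equation (3.48): let `a` be nondecreasing right-continuous
with `a = 0` on `(-∞, 0]` and right inverse `c(t) = inf {s ≥ 0 : a(s) > t}` finite for all
`t ≥ 0`; let `G` be nonnegative, nondecreasing, right-continuous, vanishing on `(-∞, 0)`, and
let `Ga` be the (nondecreasing, right-continuous) function equal to `G ∘ a` on `[0,∞)` and to
`0` on `(-∞, 0)`.  With `c(s-) := lim_{u ↑ s} c(u)` (`:= 0` for `s = 0`), one has
`∫_{[0,∞)} f dμ_{G∘a} = ∫_{[0,∞)} f(c(s-)) dμ_G` for every nonnegative Borel `f`. -/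
theorem stmt8 (a G Ga : StieltjesFunction ℝ)
    (ha0 : ∀ x : ℝ, x ≤ 0 → a x = 0)
    (hG0 : ∀ x : ℝ, x < 0 → G x = 0)
    (hG_nonneg : ∀ x : ℝ, 0 ≤ G x)
    (hGa : ∀ x : ℝ, 0 ≤ x → Ga x = G (a x))
    (hGa0 : ∀ x : ℝ, x < 0 → Ga x = 0)
    (hfin : ∀ t : ℝ, 0 ≤ t → ∃ s : ℝ, 0 ≤ s ∧ t < a s)
    (c : ℝ → ℝ) (hc : ∀ t, c t = sInf {s : ℝ | 0 ≤ s ∧ t < a s})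
    (cm : ℝ → ℝ) (hcm : ∀ s, cm s = sSup (c '' Set.Ico (0 : ℝ) s))
    (f : ℝ → ℝ≥0∞) (hf : Measurable f) :
    ∫⁻ s in Set.Ici (0 : ℝ), f s ∂Ga.measure
      = ∫⁻ s in Set.Ici (0 : ℝ), f (cm s) ∂G.measure := by
  classical
  -- basic facts about `a`
  have a_nonneg : ∀ x : ℝ, 0 ≤ a x := by
    intro x
    rcases le_or_gt x 0 with h | h
    · rw [ha0 x h]
    · rw [← ha0 0 le_rfl]; exact a.mono h.le
  -- the defining set of `c` is nonempty and bounded below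
  have hSne : ∀ t : ℝ, {s : ℝ | 0 ≤ s ∧ t < a s}.Nonempty := by
    intro t
    rcases le_or_gt 0 t with h | h
    · exact hfin t h
    · exact ⟨0, le_rfl, by rw [ha0 0 le_rfl]; exact h⟩
  have hSbd : ∀ t : ℝ, BddBelow {s : ℝ | 0 ≤ s ∧ t < a s} :=
    fun t => ⟨0, fun s hs => hs.1⟩
  have c_nonneg : ∀ t, 0 ≤ c t := by
    intro t; rw [hc]; exact le_csInf (hSne t) fun s hs => hs.1
  have c_mono : Monotone c := by
    intro t t' h
    rw [hc, hc]
    exact csInf_le_csInf (hSbd t) (hSne t') fun s hs => ⟨hs.1, lt_of_le_of_lt h hs.2⟩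
  have c_le : ∀ t b : ℝ, 0 ≤ b → t < a b → c t ≤ b := by
    intro t b hb hab
    rw [hc]; exact csInf_le (hSbd t) ⟨hb, hab⟩
  -- if `c t ≤ b` then `t ≤ a b`, using right-continuity of `a`
  have le_a_of_c_le : ∀ t b : ℝ, c t ≤ b → t ≤ a b := by
    intro t b hcb
    by_contra h
    push_neg at h
    have hrc : Filter.Tendsto a (nhdsWithin b (Set.Ici b)) (nhds (a b)) :=
      a.right_continuous b
    have hev : ∀ᶠ r in nhdsWithin b (Set.Ioi b), a r < t := by
      have h1 : ∀ᶠ r in nhdsWithin b (Set.Ici b), a r < t :=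
        hrc (Iio_mem_nhds h)
      exact h1.filter_mono (nhdsWithin_mono b Set.Ioi_subset_Ici_self)
    obtain ⟨r, hr, hrb⟩ := hev.exists_mem
    obtain ⟨r0, hr0⟩ := hr
    have hne : (nhdsWithin b (Set.Ioi b)).NeBot := nhdsGT_neBot b
    obtain ⟨r, hr⟩ := hev.exists
    -- from `c t ≤ b < ?` find an element of the set below any `r' > b`
    have hbr : b < b + 1 := by linarith
    -- we need `r > b`; redo with frequently
    have hev2 : ∃ r, b < r ∧ a r < t := by
      have := (hev.and (eventually_mem_nhdsWithin (s := Set.Ioi b) (a := b))).exists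
      obtain ⟨r, h1, h2⟩ := this
      exact ⟨r, h2, h1⟩
    obtain ⟨r', hbr', har'⟩ := hev2
    have hinf : c t < r' := lt_of_le_of_lt hcb hbr'
    rw [hc] at hinf
    obtain ⟨s, hs, hsr⟩ := exists_lt_of_csInf_lt (hSne t) hinf
    have : t < a r' := lt_of_lt_of_le hs.2 (a.mono hsr.le)
    linarith
  -- facts about `cm`
  have bddA : ∀ s : ℝ, BddAbove (c '' Set.Ico (0 : ℝ) s) := by
    intro s
    refine ⟨c s, ?_⟩
    rintro x ⟨u, hu, rfl⟩
    exact c_mono hu.2.le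
  have cm_nonneg : ∀ s, 0 ≤ cm s := by
    intro s
    rw [hcm]
    exact Real.sSup_nonneg (by rintro x ⟨u, _, rfl⟩; exact c_nonneg u)
  have cm_mono : Monotone cm := by
    intro s s' h
    rw [hcm s, hcm s']
    refine Real.sSup_le ?_ ?_
    · rintro x ⟨u, hu, rfl⟩
      exact le_csSup (bddA s') ⟨u, ⟨hu.1, lt_of_lt_of_le hu.2 h⟩, rfl⟩
    · rw [← hcm]; exact cm_nonneg s'
  have cm_meas : Measurable cm := cm_mono.measurable
  -- the key preimage identity
  have key : ∀ b : ℝ, 0 ≤ b → cm ⁻¹' (Set.Iic b) ∩ Set.Ici 0 = Set.Icc 0 (a b) := by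
    intro b hb
    ext s
    simp only [Set.mem_inter_iff, Set.mem_preimage, Set.mem_Iic, Set.mem_Ici, Set.mem_Icc]
    constructor
    · rintro ⟨hsb, hs0⟩
      refine ⟨hs0, ?_⟩
      by_contra h
      push_neg at h
      obtain ⟨u, hu1, hu2⟩ := exists_between h
      have hu0 : 0 ≤ u := le_trans (a_nonneg b) hu1.le
      have h1 : c u ≤ cm s := by
        rw [hcm]; exact le_csSup (bddA s) ⟨u, ⟨hu0, hu2⟩, rfl⟩
      have h2 : u ≤ a b := le_a_of_c_le u b (h1.trans hsb)
      exact absurd h2 (not_le.2 hu1)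
    · rintro ⟨hs0, hsab⟩
      refine ⟨?_, hs0⟩
      rw [hcm]
      refine Real.sSup_le ?_ hb
      rintro x ⟨u, hu, rfl⟩
      exact c_le u b hb (lt_of_lt_of_le hu.2 hsab)
  -- left limits at 0 vanish
  have leftLim_zero : ∀ (F : StieltjesFunction ℝ), (∀ x : ℝ, x < 0 → F x = 0) →
      Function.leftLim (F : ℝ → ℝ) 0 = 0 := by
    intro F hF
    refine leftLim_eq_of_tendsto ?_
    · have : ∀ᶠ x in nhdsWithin (0 : ℝ) (Set.Iio 0), F x = 0 :=
        eventually_nhdsWithin_of_forall fun x hx => hF x hx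
      exact Filter.Tendsto.congr' (Filter.EventuallyEq.symm this) tendsto_const_nhds
  have hLG : Function.leftLim (G : ℝ → ℝ) 0 = 0 := leftLim_zero G hG0
  have hLGa : Function.leftLim (Ga : ℝ → ℝ) 0 = 0 := leftLim_zero Ga hGa0
  -- the two restricted measures
  set μ := Ga.measure.restrict (Set.Ici (0 : ℝ)) with hμ
  set ν := (G.measure.restrict (Set.Ici (0 : ℝ))).map cm with hν
  have hμIic : ∀ b : ℝ, μ (Set.Iic b) = ENNReal.ofReal (Ga b) := by
    intro b
    rw [hμ, Measure.restrict_apply measurableSet_Iic, Set.Iic_inter_Ici]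
    rcases le_or_gt 0 b with hb | hb
    · rw [Ga.measure_Icc, hLGa, sub_zero]
    · rw [Set.Icc_eq_empty (not_le.2 hb), measure_empty, hGa0 b hb,
        ENNReal.ofReal_zero]
  have hνIic : ∀ b : ℝ, ν (Set.Iic b) = ENNReal.ofReal (Ga b) := by
    intro b
    rw [hν, Measure.map_apply cm_meas measurableSet_Iic,
      Measure.restrict_apply (cm_meas measurableSet_Iic)]
    rcases le_or_gt 0 b with hb | hb
    · rw [key b hb, G.measure_Icc, hLG, sub_zero, hGa b hb]
    · have : cm ⁻¹' Set.Iic b ∩ Set.Ici 0 = ∅ := by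
        ext s
        simp only [Set.mem_inter_iff, Set.mem_preimage, Set.mem_Iic, Set.mem_Ici,
          Set.mem_empty_iff_false, iff_false, not_and]
        intro hsb
        exact absurd (le_trans (cm_nonneg s) hsb) (not_le.2 hb)
      rw [this, measure_empty, hGa0 b hb, ENNReal.ofReal_zero]
  -- equality of measures
  have main : μ = ν := by
    refine Measure.ext_of_Ioc' μ ν ?_ ?_
    · intro p q _
      refine ne_top_of_le_ne_top ?_ (measure_mono Set.Ioc_subset_Iic_self)
      rw [hμIic q]
      exact ENNReal.ofReal_ne_top
    · intro p q hpq
      have hμp : μ (Set.Iic p) ≠ ⊤ := by rw [hμIic p]; exact ENNReal.ofReal_ne_top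
      have hνp : ν (Set.Iic p) ≠ ⊤ := by rw [hνIic p]; exact ENNReal.ofReal_ne_top
      rw [← Set.Iic_sdiff_Iic,
        measure_diff (Set.Iic_subset_Iic.2 hpq.le) nullMeasurableSet_Iic hμp,
        measure_diff (Set.Iic_subset_Iic.2 hpq.le) nullMeasurableSet_Iic hνp,
        hμIic p, hμIic q, hνIic p, hνIic q]
  calc ∫⁻ s in Set.Ici (0 : ℝ), f s ∂Ga.measure = ∫⁻ s, f s ∂μ := rfl
    _ = ∫⁻ s, f s ∂ν := by rw [main]
    _ = ∫⁻ s, f (cm s) ∂(G.measure.restrict (Set.Ici (0 : ℝ))) := by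
        rw [hν, lintegral_map hf cm_meas]
    _ = ∫⁻ s in Set.Ici (0 : ℝ), f (cm s) ∂G.measure := rfl

end Stmt8
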